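/- Let V₁, V₂ and W be finite-dimensional real vector spaces and let φ: V₁ × V₂ → W be a bilinear map. If X ∈ RE(φ) and N(X) = ker φ_X, then span{φ(Z,Y) : Z ∈ V₁, Y ∈ N(X)} ⊆ φ_X(V₂). -/

import Mathlib

open Module LinearMap
open scoped Matrix Polynomial

/-- Proposition (firstst): if `X` is a regular element of the bilinear map `φ` and
`N(X) = ker φ_X`, then `S(φ|_{V₁ × N(X)}) ⊆ φ_X(V₂)`. -/
theorem stmt_2
    {V₁ V₂ W : Type*}
    [AddCommGroup V₁] [Module ℝ V₁] [FiniteDimensional ℝ V₁]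
    [AddCommGroup V₂] [Module ℝ V₂] [FiniteDimensional ℝ V₂]
    [AddCommGroup W] [Module ℝ W] [FiniteDimensional ℝ W]
    (φ : V₁ →ₗ[ℝ] V₂ →ₗ[ℝ] W)
    (κ : ℕ) (hκ : κ = ⨆ X : V₁, finrank ℝ (LinearMap.range (φ X)))
    (X : V₁) (hX : finrank ℝ (LinearMap.range (φ X)) = κ) :
    Submodule.span ℝ {w | ∃ Z : V₁, ∃ Y ∈ LinearMap.ker (φ X), φ Z Y = w} ≤
      LinearMap.range (φ X) := by
  rw [Submodule.span_le]
  rintro w ⟨Z, Y, hY, rfl⟩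
  set w := φ Z Y with hw
  by_contra hwr
  -- rank bound
  have hrank : ∀ X' : V₁, finrank ℝ (LinearMap.range (φ X')) ≤ κ := by
    intro X'
    have hbdd : BddAbove (Set.range fun X' : V₁ => finrank ℝ (LinearMap.range (φ X'))) :=
      ⟨finrank ℝ W, by rintro _ ⟨X', rfl⟩; exact (LinearMap.range (φ X')).finrank_le⟩
    exact hκ ▸ le_ciSup hbdd X'
  -- complement of the kernel
  obtain ⟨U, hU⟩ := Submodule.exists_isCompl (LinearMap.ker (φ X))
  set A : U →ₗ[ℝ] W := (φ X).comp U.subtype with hA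
  set B : U →ₗ[ℝ] W := (φ Z).comp U.subtype with hB
  have hAker : LinearMap.ker A = ⊥ := by
    rw [eq_bot_iff]
    rintro u hu
    have h1 : (u : V₂) ∈ LinearMap.ker (φ X) ⊓ U := ⟨hu, u.2⟩
    rw [hU.inf_eq_bot] at h1
    have h2 : (u : V₂) = 0 := by simpa using h1
    simpa [Submodule.mem_bot] using Subtype.ext h2
  have hAinj : Function.Injective A := LinearMap.ker_eq_bot.mp hAker
  have hArange : LinearMap.range A = LinearMap.range (φ X) := by
    have h1 : Submodule.map (φ X) (LinearMap.ker (φ X) ⊔ U) = LinearMap.range (φ X) := by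
      rw [hU.sup_eq_top, Submodule.map_top]
    rw [Submodule.map_sup] at h1
    have h2 : Submodule.map (φ X) (LinearMap.ker (φ X)) = ⊥ := by
      rw [eq_bot_iff]; rintro x ⟨y, hy, rfl⟩; exact hy
    rw [h2, bot_sup_eq] at h1
    rw [hA, LinearMap.range_comp, Submodule.range_subtype, h1]
  have hUrank : finrank ℝ U = κ := by
    rw [← hX, ← hArange, LinearMap.finrank_range_of_inj hAinj]
  -- left inverse of A
  obtain ⟨P, hP⟩ := A.exists_leftInverse_of_injective hAker
  set T : U →ₗ[ℝ] U := P.comp B with hT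
  set Cm : U →ₗ[ℝ] W := B - A.comp T with hCm
  -- the bad vector and a dual functional
  set v : W := w - A (P w) with hv
  have hvne : v ≠ 0 := by
    intro h
    apply hwr
    rw [← hArange]
    rw [hv] at h
    exact ⟨P w, (sub_eq_zero.mp h).symm⟩
  obtain ⟨ℓ, hℓ⟩ : ∃ ℓ : Module.Dual ℝ W, ℓ v = 1 := by
    have h1 : ¬∀ ℓ : Module.Dual ℝ W, ℓ v = 0 := by
      rw [Module.forall_dual_apply_eq_zero_iff]; exact hvne
    push_neg at h1
    obtain ⟨ℓ0, hℓ0⟩ := h1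
    exact ⟨(ℓ0 v)⁻¹ • ℓ0, by simp [inv_mul_cancel₀ hℓ0]⟩
  -- matrix setup
  set n := finrank ℝ U with hn
  set b : Basis (Fin n) ℝ U := finBasis ℝ U with hb
  set M : Matrix (Fin n) (Fin n) ℝ := LinearMap.toMatrix b b T with hM
  set N : Matrix (Fin n) (Fin n) ℝ[X] := 1 + (Polynomial.X : ℝ[X]) • M.map Polynomial.C with hN
  have hNeval : ∀ t : ℝ, N.map (Polynomial.evalRingHom t) = 1 + t • M := by
    intro t
    ext i j
    simp only [hN, Matrix.map_apply, Matrix.add_apply, Matrix.smul_apply, Matrix.one_apply,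
      Polynomial.coe_evalRingHom, Polynomial.eval_add, apply_ite (Polynomial.eval t),
      Polynomial.eval_one, Polynomial.eval_zero, smul_eq_mul, Polynomial.eval_mul,
      Polynomial.eval_X, Polynomial.eval_C]
  set p : ℝ[X] := N.det with hp
  have hpeval : ∀ t : ℝ, p.eval t = (1 + t • M).det := by
    intro t
    have h2 := RingHom.map_det (Polynomial.evalRingHom t) N
    rw [RingHom.mapMatrix_apply, hNeval t] at h2
    exact h2
  set pv : Fin n → ℝ := fun i => b.repr (P w) i with hpv
  set c : Fin n → ℝ := fun i => ℓ (Cm (b i)) with hc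
  set q : ℝ[X] := Polynomial.X * ∑ i, Polynomial.C (c i) *
      (N.adjugate *ᵥ fun j => Polynomial.C (pv j)) i with hq
  -- the key pointwise identity
  have key : ∀ t : ℝ, t ≠ 0 → p.eval t ≠ 0 → q.eval t = p.eval t := by
    intro t ht hpt
    rw [hpeval] at hpt
    set Nt : Matrix (Fin n) (Fin n) ℝ := 1 + t • M with hNt
    set Et : U →ₗ[ℝ] U := LinearMap.id + t • T with hEt
    have hEtM : LinearMap.toMatrix b b Et = Nt := by
      rw [hEt, _root_.map_add, _root_.map_smul, LinearMap.toMatrix_id, hNt, hM]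
    have hdetNt : IsUnit Nt.det := isUnit_iff_ne_zero.mpr hpt
    have hEtinj : Function.Injective Et := by
      have h3 : IsUnit (LinearMap.toMatrix b b Et).det := by rw [hEtM]; exact hdetNt
      have h4 := LinearEquiv.coe_ofIsUnitDet h3
      rw [← h4]
      exact (LinearEquiv.ofIsUnitDet h3).injective
    have hPA : ∀ u : U, P (A u) = u := fun u => LinearMap.congr_fun hP u
    have hEtapp : ∀ u : U, Et u = P ((A + t • B) u) := by
      intro u
      simp only [hEt, LinearMap.add_apply, LinearMap.smul_apply, LinearMap.id_apply, _root_.map_add,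
        _root_.map_smul, hPA u, hT, LinearMap.comp_apply]
    have hABinj : Function.Injective (A + t • B) := by
      intro x y hxy
      apply hEtinj
      rw [hEtapp x, hEtapp y, hxy]
    have hcomp : ∀ u : U, φ (X + t • Z) u = (A + t • B) u := by
      intro u
      simp [hA, hB, _root_.map_add, _root_.map_smul]
    have hle : LinearMap.range (A + t • B) ≤ LinearMap.range (φ (X + t • Z)) := by
      rintro _ ⟨u, rfl⟩
      exact ⟨u, hcomp u⟩
    have hfr : finrank ℝ (LinearMap.range (A + t • B)) = κ := by
      rw [LinearMap.finrank_range_of_inj hABinj, ← hn, hUrank]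
    have hreq : LinearMap.range (A + t • B) = LinearMap.range (φ (X + t • Z)) :=
      Submodule.eq_of_le_of_finrank_le hle (by rw [hfr]; exact hrank _)
    have htw : φ (X + t • Z) Y = t • w := by
      have h5 : φ X Y = 0 := LinearMap.mem_ker.mp hY
      simp [_root_.map_add, _root_.map_smul, h5, hw]
    have hwinr : w ∈ LinearMap.range (A + t • B) := by
      have h6 : t • w ∈ LinearMap.range (A + t • B) := by
        rw [hreq]; exact ⟨Y, htw⟩
      obtain ⟨u, hu⟩ := h6
      exact ⟨t⁻¹ • u, by rw [_root_.map_smul, hu, smul_smul, inv_mul_cancel₀ ht, one_smul]⟩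
    obtain ⟨u, hu⟩ := hwinr
    have hPw : P w = Et u := by rw [← hu]; exact (hEtapp u).symm
    have hvCu : v = t • Cm u := by
      have h1 : w = A u + t • B u := by
        rw [← hu]; simp
      have h2 : A (P w) = A u + t • A (T u) := by
        rw [hPw, hEt]
        simp [_root_.map_add, _root_.map_smul]
      rw [hv, h2, h1, hCm]
      simp only [LinearMap.sub_apply, LinearMap.comp_apply, smul_sub]
      abel
    have hℓCu : t * ℓ (Cm u) = 1 := by
      rw [← hℓ, hvCu, _root_.map_smul, smul_eq_mul]
    have hmul : Nt *ᵥ ⇑(b.repr u) = ⇑(b.repr (P w)) := by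
      rw [← hEtM, LinearMap.toMatrix_mulVec_repr, hPw]
    have hpveq : pv = ⇑(b.repr (P w)) := rfl
    have hadj : Nt.adjugate *ᵥ pv = Nt.det • ⇑(b.repr u) := by
      rw [hpveq, ← hmul, Matrix.mulVec_mulVec, Matrix.adjugate_mul, Matrix.smul_mulVec,
        Matrix.one_mulVec]
    have hadjmap : (Polynomial.evalRingHom t).mapMatrix N.adjugate = Nt.adjugate := by
      rw [RingHom.map_adjugate]
      congr 1
      rw [RingHom.mapMatrix_apply, hNeval t]
    have hqt : q.eval t = t * ∑ i, c i * (Nt.adjugate *ᵥ pv) i := by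
      rw [hq]
      simp only [Polynomial.eval_mul, Polynomial.eval_X, Polynomial.eval_finset_sum,
        Polynomial.eval_C]
      congr 1
      apply Finset.sum_congr rfl
      intro i _
      congr 1
      rw [← hadjmap]
      simp [Matrix.mulVec, dotProduct, Polynomial.eval_finset_sum,
        RingHom.mapMatrix_apply, Matrix.map_apply]
    have hCmu : ℓ (Cm u) = ∑ i, b.repr u i * c i := by
      have h1 : u = ∑ i, b.repr u i • b i := (b.sum_repr u).symm
      conv_lhs => rw [h1]
      simp only [_root_.map_sum, _root_.map_smul, smul_eq_mul, hc]
    have hq2 : q.eval t = Nt.det * (t * ℓ (Cm u)) := by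
      rw [hqt, hadj, hCmu]
      simp only [Pi.smul_apply, smul_eq_mul]
      rw [Finset.mul_sum, Finset.mul_sum, Finset.mul_sum]
      apply Finset.sum_congr rfl
      intro i _
      ring
    rw [hq2, hℓCu, mul_one, hpeval]
  -- infinitely many points of agreement, hence p = q
  have hpq : p = q := by
    apply Polynomial.eq_of_infinite_eval_eq
    have hpne : p ≠ 0 := by
      intro h
      have h2 := hpeval 0
      rw [h] at h2
      simp at h2
    have hsub : {t : ℝ | t ≠ 0 ∧ p.eval t ≠ 0} ⊆ {t : ℝ | p.eval t = q.eval t} := by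
      rintro t ⟨h1, h2⟩; exact (key t h1 h2).symm
    apply Set.Infinite.mono hsub
    have heq : {t : ℝ | t ≠ 0 ∧ p.eval t ≠ 0} = ({(0:ℝ)} ∪ {x | p.IsRoot x})ᶜ := by
      ext t; simp [Polynomial.IsRoot, not_or, and_comm]
    rw [heq]
    exact Set.Finite.infinite_compl
      ((Set.finite_singleton 0).union (Polynomial.finite_setOf_isRoot hpne))
  -- contradiction by evaluating at 0
  have h0 : p.eval 0 = 1 := by rw [hpeval]; simp
  have h1 : q.eval 0 = 0 := by rw [hq]; simp
  rw [hpq, h1] at h0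
  exact one_ne_zero h0.symm
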